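/- If x, y ∈ ℝ^p are weakly decreasing vectors with ∑ x_i = ∑ y_i, then Π(x) ⊆ Π(y) if and only if the partial sums satisfy ∑_{i≤k} x_i ≤ ∑_{i≤k} y_i for all k = 1,...,p (i.e., x is majorized by y). -/

import Mathlib

open Finset

lemma strictMono_val_le {k p : ℕ} {f : Fin k → Fin p} (hf : StrictMono f) :
    ∀ (n : ℕ) (hn : n < k), n ≤ (f ⟨n, hn⟩ : ℕ) := by
  intro n
  induction n with
  | zero => intro hn; exact Nat.zero_le _
  | succ m ih =>
    intro hn
    have h1 : (⟨m, by omega⟩ : Fin k) < ⟨m + 1, hn⟩ := by simp [Fin.lt_def]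
    have h2 := hf h1
    have h3 := ih (by omega)
    rw [Fin.lt_def] at h2
    omega

lemma filter_lt_eq_map {p k : ℕ} (hk : k ≤ p) :
    Finset.univ.filter (fun i : Fin p => (i : ℕ) < k)
      = Finset.map (Fin.castLEEmb hk) Finset.univ := by
  ext i
  simp only [mem_filter, mem_univ, true_and, mem_map, Fin.castLEEmb_apply]
  constructor
  · intro hi; exact ⟨⟨i, hi⟩, by ext; simp⟩
  · rintro ⟨j, rfl⟩; exact j.isLt

lemma sum_subset_le {p k : ℕ} {y : Fin p → ℝ} (hy : Antitone y) (s : Finset (Fin p))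
    (hc : s.card = k) (hk : k ≤ p) :
    ∑ i ∈ s, y i ≤ ∑ j : Fin k, y (Fin.castLE hk j) := by
  set e := s.orderEmbOfFin hc
  have himg : Finset.image (fun j => e j) Finset.univ = s := by
    apply Finset.coe_injective
    rw [coe_image, coe_univ, Set.image_univ]
    exact s.range_orderEmbOfFin hc
  have hinj : Function.Injective (fun j => e j) := e.injective
  have hsum : ∑ i ∈ s, y i = ∑ j : Fin k, y (e j) := by
    rw [← himg, Finset.sum_image (fun a _ b _ h => hinj h)]
  rw [hsum]
  apply Finset.sum_le_sum
  intro j _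
  apply hy
  show (Fin.castLE hk j : ℕ) ≤ (e j : ℕ)
  have := strictMono_val_le e.strictMono j (j.isLt)
  simpa using this

lemma abel_identity (c g : ℕ → ℝ) (n : ℕ) :
    ∑ i ∈ Finset.range n, c i * g i
      = (∑ i ∈ Finset.range n, c i) * g n
        + ∑ i ∈ Finset.range n, (∑ j ∈ Finset.range (i + 1), c j) * (g i - g (i + 1)) := by
  induction n with
  | zero => simp
  | succ n ih =>
    rw [Finset.sum_range_succ (fun i => c i * g i),
      Finset.sum_range_succ (fun i => (∑ j ∈ Finset.range (i + 1), c j) * (g i - g (i + 1))),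
      Finset.sum_range_succ c, ih]
    ring

lemma abel_ineq (n : ℕ) (a b g : ℕ → ℝ) (hg : ∀ i, i < n → g (i + 1) ≤ g i)
    (hab : ∀ k, k ≤ n → ∑ i ∈ Finset.range k, a i ≤ ∑ i ∈ Finset.range k, b i)
    (heq : ∑ i ∈ Finset.range n, a i = ∑ i ∈ Finset.range n, b i) :
    ∑ i ∈ Finset.range n, a i * g i ≤ ∑ i ∈ Finset.range n, b i * g i := by
  have key : 0 ≤ ∑ i ∈ Finset.range n, (b i - a i) * g i := by
    rw [abel_identity (fun i => b i - a i) g n]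
    have h1 : ∑ i ∈ Finset.range n, (b i - a i) = 0 := by
      rw [Finset.sum_sub_distrib]; linarith
    rw [h1, zero_mul, zero_add]
    apply Finset.sum_nonneg
    intro i hi
    rw [Finset.mem_range] at hi
    apply mul_nonneg
    · rw [Finset.sum_sub_distrib]
      have := hab (i + 1) (by omega)
      linarith
    · have := hg i hi; linarith
  have : ∑ i ∈ Finset.range n, (b i - a i) * g i
      = ∑ i ∈ Finset.range n, b i * g i - ∑ i ∈ Finset.range n, a i * g i := by
    rw [← Finset.sum_sub_distrib]; congr 1; ext i; ring
  linarith [this ▸ key]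

lemma range_sum_eq_filter {p : ℕ} (f : Fin p → ℝ) (k : ℕ) (hk : k ≤ p) :
    ∑ i ∈ Finset.univ.filter (fun i : Fin p => (i : ℕ) < k), f i
      = ∑ i ∈ Finset.range k, (if h : i < p then f ⟨i, h⟩ else 0) := by
  rw [filter_lt_eq_map hk, Finset.sum_map,
    ← Fin.sum_univ_eq_sum_range (fun i => if h : i < p then f ⟨i, h⟩ else 0) k]
  apply Finset.sum_congr rfl
  intro j _
  rw [dif_pos (lt_of_lt_of_le j.isLt hk)]
  rfl

lemma dot_le {p : ℕ} {x y : Fin p → ℝ} (hx : Antitone x)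
    (hsum : ∑ i, x i = ∑ i, y i)
    (h : ∀ k : ℕ, k ≤ p →
        ∑ i ∈ Finset.univ.filter (fun i : Fin p => (i : ℕ) < k), x i
          ≤ ∑ i ∈ Finset.univ.filter (fun i : Fin p => (i : ℕ) < k), y i)
    (v : Fin p → ℝ) :
    ∃ ρ : Equiv.Perm (Fin p), ∑ i, x i * v i ≤ ∑ i, y (ρ i) * v i := by
  rcases Nat.eq_zero_or_pos p with hp | hp
  · subst hp; exact ⟨1, by simp⟩
  set τ := Tuple.sort (fun i => -(v i)) with hτ
  have hmono : Monotone ((fun i => -(v i)) ∘ τ) := Tuple.monotone_sort _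
  set v' : Fin p → ℝ := v ∘ τ with hv'def
  have hv' : Antitone v' := by
    intro i j hij
    have := hmono hij
    simpa [hv'def] using this
  have hmv : Monovary x v' := by
    intro i j hlt
    apply hx
    by_contra hle
    push_neg at hle
    exact absurd (hv' hle.le) (not_le_of_gt hlt)
  have step1 : ∑ i, x i * v i ≤ ∑ i, x i * v' i := by
    have := hmv.sum_mul_comp_perm_le_sum_mul (σ := τ⁻¹)
    simpa [hv'def, Function.comp] using this
  have step2 : ∑ i, x i * v' i ≤ ∑ i, y i * v' i := by
    set a : ℕ → ℝ := fun i => if h : i < p then x ⟨i, h⟩ else 0 with ha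
    set b : ℕ → ℝ := fun i => if h : i < p then y ⟨i, h⟩ else 0 with hb
    set g : ℕ → ℝ := fun i => v' ⟨min i (p - 1), by omega⟩ with hg
    have hga : ∀ i : Fin p, a i = x i ∧ b i = y i ∧ g i = v' i := by
      intro i
      refine ⟨by simp [ha, i.isLt], by simp [hb, i.isLt], ?_⟩
      have : min (i : ℕ) (p - 1) = (i : ℕ) := by have := i.isLt; omega
      simp [hg, this]
    have convx : ∑ i, x i * v' i = ∑ i ∈ Finset.range p, a i * g i := by
      rw [← Fin.sum_univ_eq_sum_range (fun i => a i * g i) p]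
      exact Finset.sum_congr rfl fun i _ => by rw [(hga i).1, (hga i).2.2]
    have convy : ∑ i, y i * v' i = ∑ i ∈ Finset.range p, b i * g i := by
      rw [← Fin.sum_univ_eq_sum_range (fun i => b i * g i) p]
      exact Finset.sum_congr rfl fun i _ => by rw [(hga i).2.1, (hga i).2.2]
    rw [convx, convy]
    apply abel_ineq
    · intro i _
      apply hv'
      show min i (p - 1) ≤ min (i + 1) (p - 1)
      omega
    · intro k hk
      rw [← range_sum_eq_filter x k hk, ← range_sum_eq_filter y k hk]
      exact h k hk
    · rw [← range_sum_eq_filter x p le_rfl, ← range_sum_eq_filter y p le_rfl]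
      have hfu : Finset.univ.filter (fun i : Fin p => (i : ℕ) < p) = Finset.univ := by
        apply Finset.filter_true_of_mem; intro i _; exact i.isLt
      rw [hfu]; exact hsum
  have step3 : ∑ i, y i * v' i = ∑ i, y (τ⁻¹ i) * v i := by
    rw [← Equiv.sum_comp τ (fun i => y (τ⁻¹ i) * v i)]
    exact Finset.sum_congr rfl fun i _ => by simp [hv'def]
  exact ⟨τ⁻¹, by rw [← step3]; exact step1.trans step2⟩

lemma clm_repr {p : ℕ} (f : (Fin p → ℝ) →L[ℝ] ℝ) (w : Fin p → ℝ) :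
    f w = ∑ i, w i * f (Pi.single i 1) := by
  have hw : w = ∑ i, w i • (Pi.single i 1 : Fin p → ℝ) := by
    conv_lhs => rw [← Finset.univ_sum_single w]
    apply Finset.sum_congr rfl
    intro i _
    rw [← Pi.single_smul, smul_eq_mul, mul_one]
  conv_lhs => rw [hw]
  rw [map_sum]
  exact Finset.sum_congr rfl fun i _ => by rw [map_smul, smul_eq_mul]



/-- The permutahedron of `v`: the convex hull of all coordinate permutations. -/
def permutahedron {p : ℕ} (v : Fin p → ℝ) : Set (Fin p → ℝ) :=
  convexHull ℝ {w | ∃ σ : Equiv.Perm (Fin p), w = v ∘ σ}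

/-- For weakly decreasing `x, y` with equal total sum, `Π(x) ⊆ Π(y)` iff the
partial sums satisfy `∑_{i<k} x i ≤ ∑_{i<k} y i` for every `k`
(i.e. `x` is majorized by `y`). -/
theorem permutahedron_subset_iff_majorized (p : ℕ) (x y : Fin p → ℝ)
    (hx : Antitone x) (hy : Antitone y) (hsum : ∑ i, x i = ∑ i, y i) :
    permutahedron x ⊆ permutahedron y ↔
      ∀ k : ℕ, k ≤ p →
        ∑ i ∈ Finset.univ.filter (fun i : Fin p => (i : ℕ) < k), x i
          ≤ ∑ i ∈ Finset.univ.filter (fun i : Fin p => (i : ℕ) < k), y i := by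
  constructor
  · intro hsub k hk
    have hxmem : x ∈ permutahedron y := by
      apply hsub
      exact subset_convexHull ℝ _ ⟨1, by ext i; simp⟩
    set filt := Finset.univ.filter (fun i : Fin p => (i : ℕ) < k) with hfilt
    have hcard : filt.card = k := by
      rw [hfilt, filter_lt_eq_map hk, Finset.card_map, Finset.card_univ, Fintype.card_fin]
    have hfsum : ∀ z : Fin p → ℝ, ∑ i ∈ filt, z i = ∑ j : Fin k, z (Fin.castLE hk j) := by
      intro z
      rw [hfilt, filter_lt_eq_map hk, Finset.sum_map]
      rfl
    have hlin : IsLinearMap ℝ (fun w : Fin p → ℝ => ∑ i ∈ filt, w i) := by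
      constructor
      · intro a b; simp [Finset.sum_add_distrib]
      · intro c a; simp [Finset.mul_sum]
    have hD : permutahedron y ⊆ {w : Fin p → ℝ | ∑ i ∈ filt, w i ≤ ∑ i ∈ filt, y i} := by
      apply convexHull_min
      · rintro w ⟨σ, rfl⟩
        show ∑ i ∈ filt, y (σ i) ≤ ∑ i ∈ filt, y i
        have hinj : ∀ a ∈ filt, ∀ b ∈ filt, σ a = σ b → a = b :=
          fun a _ b _ hab => σ.injective hab
        rw [← Finset.sum_image hinj]
        have hcard' : (filt.image σ).card = k := by
          rw [Finset.card_image_of_injective _ σ.injective, hcard]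
        calc ∑ i ∈ filt.image σ, y i ≤ ∑ j : Fin k, y (Fin.castLE hk j) :=
              sum_subset_le hy _ hcard' hk
          _ = ∑ i ∈ filt, y i := (hfsum y).symm
      · exact convex_halfSpace_le hlin _
    exact hD hxmem
  · intro h
    apply convexHull_min ?_ (convex_convexHull ℝ _)
    rintro w ⟨σ, rfl⟩
    by_contra hc
    have hfin : {w : Fin p → ℝ | ∃ σ : Equiv.Perm (Fin p), w = y ∘ σ}.Finite := by
      have heq : {w : Fin p → ℝ | ∃ σ : Equiv.Perm (Fin p), w = y ∘ σ}
          = Set.range (fun σ : Equiv.Perm (Fin p) => y ∘ σ) := by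
        ext w; simp [Set.range, eq_comm]
      rw [heq]; exact Set.finite_range _
    obtain ⟨f, c, hfc, hcx⟩ := geometric_hahn_banach_closed_point
      (convex_convexHull ℝ _) (hfin.isClosed_convexHull (𝕜 := ℝ)) hc
    set v : Fin p → ℝ := fun i => f (Pi.single i 1) with hv
    obtain ⟨ρ, hρ⟩ := dot_le hx hsum h (fun j => v (σ⁻¹ j))
    have e1 : f (x ∘ σ) = ∑ i, x i * v (σ⁻¹ i) := by
      rw [clm_repr]
      rw [← Equiv.sum_comp σ (fun i => x i * v (σ⁻¹ i))]
      exact Finset.sum_congr rfl fun i _ => by simp [hv]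
    have e2 : ∑ i, y (ρ i) * v (σ⁻¹ i) = f (y ∘ (σ.trans ρ)) := by
      rw [clm_repr, ← Equiv.sum_comp σ (fun i => y (ρ i) * v (σ⁻¹ i))]
      exact Finset.sum_congr rfl fun i _ => by simp [hv]
    have hmem : y ∘ (σ.trans ρ) ∈ convexHull ℝ
        {w : Fin p → ℝ | ∃ σ : Equiv.Perm (Fin p), w = y ∘ σ} :=
      subset_convexHull ℝ _ ⟨σ.trans ρ, rfl⟩
    have := hfc _ hmem
    rw [← e2] at this
    rw [e1] at hcx
    linarith
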